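/- arXiv:2009.01185 — 6 statements merged into one kernel-verified Lean document; each statement's English description precedes it below -/
import Mathlib

section
/- Let c ∈ (0,1) and ε ∈ (0, 2c/(3k)). Let y ∈ Ω_c and x ∈ Ω_{2c/3}, and write n_i = |y^{-1}(i)| for i ∈ [k]. Suppose that for every i ∈ [k], max_{j∈[k]} t_{j,i}(x,y) ≥ n_i − nε. For each i ∈ [k], let w(i) ∈ [k] be such that t_{w(i),i}(x,y) = max_{j∈[k]} t_{j,i}(x,y). Then w is a bijection from [k] to [k]. -/
open Finset

/-- `t_{i,j}(x,z) = |x⁻¹(i) ∩ z⁻¹(j)|`. -/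
def tcount {n k : ℕ} (x z : Fin n → Fin k) (i j : Fin k) : ℕ :=
  (Finset.univ.filter fun v => x v = i ∧ z v = j).card

/-- `Ω_c`: community assignment mappings in which each community has at least `c·n` vertices. -/
def OmegaC {n k : ℕ} (c : ℝ) : Set (Fin n → Fin k) :=
  {x | ∀ i : Fin k, c * n ≤ ((Finset.univ.filter fun v => x v = i).card : ℝ)}

/-- if `y ∈ Ω_c`, `x ∈ Ω_{2c/3}`, `ε ∈ (0, 2c/(3k))` and for every `i`,
`max_j t_{j,i}(x,y) ≥ n_i − nε`, then any map `w` with `t_{w(i),i}(x,y) = max_j t_{j,i}(x,y)`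
is a bijection of `[k]`. -/
theorem stmt4 {n k : ℕ} (hkn : k ≤ n) (hk : 2 ≤ k)
    (c : ℝ) (hc : c ∈ Set.Ioo (0 : ℝ) 1)
    (ε : ℝ) (hε : ε ∈ Set.Ioo (0 : ℝ) (2 * c / (3 * k)))
    (y : Fin n → Fin k) (hy : y ∈ OmegaC c)
    (x : Fin n → Fin k) (hx : x ∈ OmegaC (2 * c / 3))
    (hmax : ∀ i : Fin k,
      (((Finset.univ.filter fun v => y v = i).card : ℝ) - n * ε) ≤
        ((Finset.univ.sup' (Finset.univ_nonempty_iff.mpr ⟨⟨0, by omega⟩⟩) fun j => tcount x y j i : ℕ) : ℝ))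
    (w : Fin k → Fin k)
    (hw : ∀ i j : Fin k, tcount x y j i ≤ tcount x y (w i) i) :
    Function.Bijective w := by
  classical
  have hn : 0 < n := by omega
  have hnR : (0:ℝ) < n := by exact_mod_cast hn
  have hkR : (0:ℝ) < k := by exact_mod_cast (by omega : 0 < k)
  rw [← Finite.surjective_iff_bijective]
  by_contra h
  simp only [Function.Surjective, not_forall, not_exists] at h
  obtain ⟨j, hj⟩ := h
  have key : ∀ i, (tcount x y j i : ℝ) ≤ n * ε := by
    intro i
    have hsup : ((Finset.univ.sup' (Finset.univ_nonempty_iff.mpr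
        ⟨⟨0, by omega⟩⟩) fun j' => tcount x y j' i : ℕ) : ℝ) ≤ tcount x y (w i) i := by
      exact_mod_cast Finset.sup'_le _ _ (fun j' _ => hw i j')
    have h1 := (hmax i).trans hsup
    have hdisj : tcount x y (w i) i + tcount x y j i
        ≤ (Finset.univ.filter fun v => y v = i).card := by
      unfold tcount
      rw [← Finset.card_union_of_disjoint]
      · apply Finset.card_le_card
        intro v hv
        simp only [Finset.mem_union, Finset.mem_filter] at hv ⊢
        tauto
      · rw [Finset.disjoint_left]
        intro v hv1 hv2
        simp only [Finset.mem_filter] at hv1 hv2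
        exact hj i (hv1.2.1 ▸ hv2.2.1 ▸ rfl)
    have hdR : (tcount x y (w i) i : ℝ) + tcount x y j i
        ≤ ((Finset.univ.filter fun v => y v = i).card : ℝ) := by exact_mod_cast hdisj
    linarith
  have hcard : (Finset.univ.filter fun v => x v = j).card = ∑ i, tcount x y j i := by
    rw [Finset.card_eq_sum_card_fiberwise (f := y) (t := Finset.univ) (by simp)]
    apply Finset.sum_congr rfl
    intro i _
    unfold tcount
    rw [Finset.filter_filter]
  have hsum : ((Finset.univ.filter fun v => x v = j).card : ℝ) ≤ k * (n * ε) := by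
    rw [hcard]
    push_cast
    calc ∑ i, (tcount x y j i : ℝ) ≤ ∑ _i : Fin k, n * ε :=
          Finset.sum_le_sum (fun i _ => key i)
      _ = k * (n * ε) := by simp [mul_comm]
  have hx' := hx j
  have hεk : k * ε < 2 * c / 3 := by
    have h2 : ε * (3 * k) < 2 * c := (lt_div_iff₀ (by positivity)).mp hε.2
    nlinarith
  nlinarith [hε.1, hc.1]
end

section
/- Let c ∈ (0,1), let n_1,...,n_k be positive integers with n_1+...+n_k = n, let y ∈ Ω_{n_1,...,n_k} ∩ Ω_c, and let x ∈ Ω_{n_1,...,n_k}. For each i ∈ [k], let w(i) ∈ [k] be such that t_{w(i),i}(x,y) = max_{j∈[k]} t_{j,i}(x,y). Then: (1) if ε ∈ (0, c/k) and max_{j∈[k]} t_{j,i}(x,y) ≥ n_i − nε for every i ∈ [k], then w is a bijection from [k] to [k]; (2) if in addition there exist i,j ∈ [k] with n_i ≠ n_j and ε < min{|n_i − n_j|/n : i,j ∈ [k], n_i ≠ n_j}, then n_i = n_{w(i)} for every i ∈ [k]. -/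
open Finset

/-- `Ω_{n₁,…,n_k}`: community assignment mappings with exactly `nsize i` vertices in
community `i`. -/
def OmegaSizes {n k : ℕ} (nsize : Fin k → ℕ) : Set (Fin n → Fin k) :=
  {x | ∀ i : Fin k, (Finset.univ.filter fun v => x v = i).card = nsize i}

/-- for `y ∈ Ω_{n₁,…,n_k} ∩ Ω_c` and `x ∈ Ω_{n₁,…,n_k}`, with `w` realizing the
columnwise maxima of `t_{·,·}(x,y)`: (1) if `ε ∈ (0, c/k)` and every columnwise maximum is at
least `n_i − nε`, then `w` is a bijection; (2) if in addition not all `n_i` are equal and `ε`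
is smaller than every `|n_i − n_j|/n` with `n_i ≠ n_j`, then `n_i = n_{w(i)}` for all `i`. -/
theorem stmt5 {n k : ℕ} (hkn : k ≤ n) (hk : 2 ≤ k)
    (nsize : Fin k → ℕ) (hpos : ∀ i, 0 < nsize i) (hsum : ∑ i, nsize i = n)
    (c : ℝ) (hc : c ∈ Set.Ioo (0 : ℝ) 1)
    (y : Fin n → Fin k) (hy : y ∈ OmegaSizes nsize ∩ OmegaC c)
    (x : Fin n → Fin k) (hx : x ∈ OmegaSizes nsize)
    (w : Fin k → Fin k)
    (hw : ∀ i j : Fin k, tcount x y j i ≤ tcount x y (w i) i)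
    (ε : ℝ) (hε : ε ∈ Set.Ioo (0 : ℝ) (c / k))
    (hmax : ∀ i : Fin k, ((nsize i : ℝ) - n * ε) ≤ (tcount x y (w i) i : ℝ)) :
    Function.Bijective w ∧
      (((∃ i j : Fin k, nsize i ≠ nsize j) ∧
          ∀ i j : Fin k, nsize i ≠ nsize j → ε < |(nsize i : ℝ) - nsize j| / n) →
        ∀ i : Fin k, nsize i = nsize (w i)) := by
  obtain ⟨hy1, hy2⟩ := hy
  obtain ⟨hε0, hεck⟩ := hε
  obtain ⟨hc0, hc1⟩ := hc
  have hn : 0 < n := lt_of_lt_of_le (by omega) hkn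
  have hk0 : 0 < k := by omega
  have hrow : ∀ i j : Fin k, tcount x y j i ≤ nsize j := by
    intro i j
    rw [← hx j]
    apply Finset.card_le_card
    intro v hv
    simp only [tcount, mem_filter, mem_univ, true_and] at hv ⊢
    exact hv.1
  have hcn : ∀ j : Fin k, c * n ≤ (nsize j : ℝ) := by
    intro j; rw [← hy1 j]; exact hy2 j
  have hnsle : ∀ j : Fin k, nsize j ≤ n := by
    intro j
    rw [← hsum]
    exact Finset.single_le_sum (fun i _ => Nat.zero_le _) (mem_univ j)
  have hsurj : Function.Surjective w := by
    intro j₀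
    by_contra hj₀
    push_neg at hj₀
    have hbound : ∑ i : Fin k, tcount x y (w i) i ≤ n - nsize j₀ := by
      have hcard : (univ.filter fun v : Fin n => ¬ x v = j₀).card = n - nsize j₀ := by
        have h1 := Finset.card_filter_add_card_filter_not
          (s := (univ : Finset (Fin n))) (p := fun v => x v = j₀)
        simp only [Finset.card_univ, Fintype.card_fin] at h1
        have h2 := hx j₀
        omega
      rw [← hcard]
      have heq : ∑ i : Fin k, tcount x y (w i) i
          = ((univ : Finset (Fin k)).biUnion fun i =>
              univ.filter fun v => x v = w i ∧ y v = i).card := by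
        rw [Finset.card_biUnion]
        · rfl
        intro a _ b _ hab
        rw [Function.onFun, Finset.disjoint_left]
        intro v hv1 hv2
        simp only [mem_filter, mem_univ, true_and] at hv1 hv2
        exact hab (hv1.2 ▸ hv2.2 ▸ rfl)
      rw [heq]
      apply Finset.card_le_card
      rw [Finset.biUnion_subset]
      intro i _ v hv
      simp only [mem_filter, mem_univ, true_and] at hv ⊢
      rw [hv.1]
      exact hj₀ i
    have hlow : (n : ℝ) - k * (n * ε) ≤ (∑ i : Fin k, tcount x y (w i) i : ℕ) := by
      have : ∑ i : Fin k, ((nsize i : ℝ) - n * ε) ≤ ∑ i : Fin k, (tcount x y (w i) i : ℝ) :=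
        Finset.sum_le_sum fun i _ => hmax i
      push_cast
      rw [Finset.sum_sub_distrib] at this
      have hns : ∑ i : Fin k, (nsize i : ℝ) = (n : ℝ) := by
        rw [← hsum]; push_cast; ring
      simp only [Finset.sum_const, Finset.card_univ, Fintype.card_fin, nsmul_eq_mul,
        hns] at this
      linarith
    have hhigh : ((∑ i : Fin k, tcount x y (w i) i : ℕ) : ℝ) ≤ (n : ℝ) - nsize j₀ := by
      have := hnsle j₀
      have hb : ((∑ i : Fin k, tcount x y (w i) i : ℕ) : ℝ) ≤ ((n - nsize j₀ : ℕ) : ℝ) := by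
        exact_mod_cast hbound
      rw [Nat.cast_sub this] at hb
      exact hb
    have hkε : (k : ℝ) * ε < c := by
      have hkpos : (0:ℝ) < k := by exact_mod_cast hk0
      calc (k:ℝ) * ε < k * (c / k) := mul_lt_mul_of_pos_left hεck hkpos
        _ = c := by field_simp
    have hcnj := hcn j₀
    have hnpos : (0 : ℝ) < n := by exact_mod_cast hn
    nlinarith [hlow, hhigh, hcnj]
  have hbij : Function.Bijective w :=
    ⟨Finite.injective_iff_surjective.mpr hsurj, hsurj⟩
  refine ⟨hbij, ?_⟩
  rintro ⟨-, h2⟩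
  have hnpos : (0 : ℝ) < n := by exact_mod_cast hn
  have hle : ∀ i, nsize i ≤ nsize (w i) := by
    intro i
    by_contra hlt
    push_neg at hlt
    have hne : nsize i ≠ nsize (w i) := by omega
    have hεlt := h2 i (w i) hne
    have habs : |(nsize i : ℝ) - nsize (w i)| = (nsize i : ℝ) - nsize (w i) := by
      apply abs_of_pos
      have : (nsize (w i) : ℝ) < nsize i := by exact_mod_cast hlt
      linarith
    rw [habs, lt_div_iff₀ hnpos] at hεlt
    have ht := hmax i
    have hr : ((tcount x y (w i) i : ℕ) : ℝ) ≤ (nsize (w i) : ℝ) := by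
      exact_mod_cast hrow i (w i)
    nlinarith
  have hsum_eq : ∑ i : Fin k, nsize (w i) = ∑ i : Fin k, nsize i :=
    Function.Bijective.sum_comp hbij nsize
  have := (Finset.sum_eq_sum_iff_of_le (fun i _ => hle i)).mp hsum_eq.symm
  intro i
  exact this i (mem_univ i)
end

section
/- Let n_1,...,n_k be positive integers with n_1+...+n_k = n, and let x, y ∈ Ω_{n_1,...,n_k} with x ≠ y. Then there exists an integer l with 2 ≤ l ≤ k and distinct communities i_1,...,i_l ∈ [k] such that, setting i_{l+1} := i_1, t_{i_{s−1},i_s}(x,y) > 0 for all s with 2 ≤ s ≤ l+1 (i.e., (i_1,...,i_l) is an l-cycle for (x,y)). -/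
open Finset

/-- if `x, y ∈ Ω_{n₁,…,n_k}` and `x ≠ y`, then there are `2 ≤ l ≤ k` distinct
communities `i₁,…,i_l` forming an `l`-cycle for `(x,y)`: cyclically consecutive pairs satisfy
`t_{i_{s-1},i_s}(x,y) > 0`. -/
theorem stmt6 {n k : ℕ} (hkn : k ≤ n) (hk : 2 ≤ k)
    (nsize : Fin k → ℕ) (hpos : ∀ i, 0 < nsize i) (hsum : ∑ i, nsize i = n)
    (x y : Fin n → Fin k) (hx : x ∈ OmegaSizes nsize) (hy : y ∈ OmegaSizes nsize)
    (hxy : x ≠ y) :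
    ∃ (l : ℕ) (hl2 : 2 ≤ l) (_ : l ≤ k) (cyc : Fin l → Fin k),
      Function.Injective cyc ∧
        ∀ s : Fin l, 0 < tcount x y (cyc s) (cyc ⟨(s.1 + 1) % l, Nat.mod_lt _ (by omega)⟩) := by
  classical
  -- The set of communities with an "outgoing" vertex.
  set S : Set (Fin k) := {i | ∃ v, x v = i ∧ y v ≠ i} with hSdef
  have key : ∀ i ∈ S, ∃ j, j ≠ i ∧ 0 < tcount x y i j ∧ j ∈ S := by
    rintro i ⟨v0, hv0x, hv0y⟩
    refine ⟨y v0, hv0y, ?_, ?_⟩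
    · rw [tcount, Finset.card_pos]
      exact ⟨v0, by simp [hv0x]⟩
    · -- y v0 ∈ S by a counting argument
      set j := y v0 with hj
      set A : Finset (Fin n) := Finset.univ.filter fun v => x v = j ∧ y v = j with hA
      set B : Finset (Fin n) := Finset.univ.filter fun v => y v = j with hB
      set C : Finset (Fin n) := Finset.univ.filter fun v => x v = j with hC
      have hAB : A ⊆ B := by
        intro w hw
        simp only [hA, hB, Finset.mem_filter, Finset.mem_univ, true_and] at hw ⊢
        exact hw.2
      have hv0B : v0 ∈ B := by simp [hB]; exact hj.symm
      have hv0A : v0 ∉ A := by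
        simp only [hA, Finset.mem_filter, Finset.mem_univ, true_and, not_and]
        intro hxv0
        exact absurd (hv0x ▸ hxv0 : i = j) (Ne.symm hv0y)
      have hcard : A.card < B.card := Finset.card_lt_card (Finset.ssubset_iff_of_subset hAB |>.mpr ⟨v0, hv0B, hv0A⟩)
      have hBC : B.card = C.card := by rw [hy j, hx j]
      have hnot : ¬ C ⊆ A := by
        intro h
        have := Finset.card_le_card h
        omega
      obtain ⟨w, hwC, hwA⟩ := Finset.not_subset.mp hnot
      simp only [hC, Finset.mem_filter, Finset.mem_univ, true_and] at hwC
      simp only [hA, Finset.mem_filter, Finset.mem_univ, true_and, not_and] at hwA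
      exact ⟨w, hwC, hwA hwC⟩
  -- Choose a successor function.
  choose g hg1 hg2 hg3 using key
  set F : Fin k → Fin k := fun i => if h : i ∈ S then g i h else i with hF
  have hF1 : ∀ i (hi : i ∈ S), F i ≠ i := fun i hi => by simp [hF, dif_pos hi]; exact hg1 i hi
  have hF2 : ∀ i (hi : i ∈ S), 0 < tcount x y i (F i) := fun i hi => by
    simp only [hF, dif_pos hi]; exact hg2 i hi
  have hF3 : ∀ i (hi : i ∈ S), F i ∈ S := fun i hi => by
    simp only [hF, dif_pos hi]; exact hg3 i hi
  -- S is nonempty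
  obtain ⟨v, hv⟩ := Function.ne_iff.mp hxy
  have hi0 : x v ∈ S := ⟨v, rfl, Ne.symm hv⟩
  set i0 := x v with hi0def
  have horb : ∀ m, F^[m] i0 ∈ S := by
    intro m
    induction m with
    | zero => exact hi0
    | succ m ih => rw [Function.iterate_succ_apply']; exact hF3 _ ih
  -- pigeonhole: find a repeat among iterates
  have hninj : ¬ Function.Injective (fun m : Fin (k+1) => F^[m.1] i0) := by
    intro h
    have := Fintype.card_le_of_injective _ h
    simp [Fintype.card_fin] at this
  obtain ⟨a, b, hab, hne⟩ := Function.not_injective_iff.mp hninj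
  wlog hltab : a.1 < b.1 generalizing a b
  · exact this b a hab.symm (Ne.symm hne) ((Nat.le_of_not_lt hltab).lt_of_ne fun h => hne (Fin.ext h.symm))
  obtain ⟨z, hz⟩ : ∃ z, z = F^[a.1] i0 := ⟨_, rfl⟩
  have hzS : z ∈ S := hz ▸ horb a.1
  have hper0 : F^[b.1 - a.1] z = z := by
    rw [hz, ← Function.iterate_add_apply]
    have h2 : b.1 - a.1 + a.1 = b.1 := by omega
    rw [h2]
    exact hab.symm
  have hPex : ∃ q, 0 < q ∧ F^[q] z = z := ⟨b.1 - a.1, by omega, hper0⟩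
  obtain ⟨p, hpdef⟩ : ∃ p, p = Nat.find hPex := ⟨_, rfl⟩
  have hppos : 0 < p := hpdef ▸ (Nat.find_spec hPex).1
  have hpper : F^[p] z = z := hpdef ▸ (Nat.find_spec hPex).2
  have hpmin : ∀ q, q < p → ¬(0 < q ∧ F^[q] z = z) := by
    intro q hq
    exact Nat.find_min hPex (hpdef ▸ hq)
  have horbz : ∀ m, F^[m] z ∈ S := by
    intro m
    induction m with
    | zero => exact hzS
    | succ m ih => rw [Function.iterate_succ_apply']; exact hF3 _ ih
  have hp2 : 2 ≤ p := by
    have hne1 : p ≠ 1 := by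
      intro h1
      have h' := hpper
      rw [h1, Function.iterate_one] at h'
      exact hF1 z hzS h'
    omega
  set cyc : Fin p → Fin k := fun s => F^[s.1] z with hcyc
  have gen : ∀ (s t : Fin p), s.1 < t.1 → cyc s = cyc t → False := by
    intro s t hlt hst
    have h1 : F^[p - t.1] (F^[s.1] z) = F^[p - t.1] (F^[t.1] z) := by
      rw [show (F^[s.1] z) = cyc s from rfl, show (F^[t.1] z) = cyc t from rfl, hst]
    rw [← Function.iterate_add_apply, ← Function.iterate_add_apply] at h1
    have h2 : p - t.1 + t.1 = p := by omega
    rw [h2, hpper] at h1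
    exact hpmin (p - t.1 + s.1) (by omega) ⟨by omega, h1⟩
  have hinj : Function.Injective cyc := by
    intro s t hst
    by_contra hne'
    have hne'' : s.1 ≠ t.1 := fun h => hne' (Fin.ext h)
    rcases Nat.lt_or_ge s.1 t.1 with hlt | hge
    · exact absurd hst (fun h => gen s t hlt h)
    · exact absurd hst.symm (fun h => gen t s (by omega) h)
  have hpk : p ≤ k := by
    have := Fintype.card_le_of_injective cyc hinj
    simpa using this
  refine ⟨p, hp2, hpk, cyc, hinj, ?_⟩
  intro s
  have hnext : cyc ⟨(s.1 + 1) % p, Nat.mod_lt _ (by omega)⟩ = F (cyc s) := by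
    show F^[(s.1 + 1) % p] z = F (F^[s.1] z)
    rcases Nat.lt_or_ge (s.1 + 1) p with h | h
    · rw [Nat.mod_eq_of_lt h, Function.iterate_succ_apply']
    · have hsp : s.1 + 1 = p := by omega
      have h3 : F^[s.1 + 1] z = z := by rw [hsp]; exact hpper
      rw [Function.iterate_succ_apply'] at h3
      rw [hsp, Nat.mod_self, Function.iterate_zero_apply]
      exact h3.symm
  rw [hnext]
  exact hF2 _ (horbz s.1)
end

section
/- Let y ∈ Ω be the true community assignment. For every x ∈ Ω, Pr(f(x) − f(y) ≤ 0) ≤ exp(−L_Φ(x,y)/8). Consequently, for any subset S ⊆ Ω, the probability that there exists x ∈ S with C(x) ≠ C(y) and f(x) ≤ f(y) is at most Σ exp(−L_Φ(x,y)/8), where the sum runs over one representative x of each equivalence class C(x) of elements of S with C(x) ≠ C(y); in particular, 1 − Pr(f(y) < min{f(x) : x ∈ S, C(x) ≠ C(y)}) is bounded by this sum. -/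
open Finset MeasureTheory ProbabilityTheory

/-- The `p × n` matrix `A_x` with entries `(A_x)_{i,j} = θ(x, i, x(j))`. -/
def matA {n k p : ℕ} (θ : (Fin n → Fin k) → Fin p → Fin k → ℝ)
    (x : Fin n → Fin k) : Fin p → Fin n → ℝ :=
  fun i j => θ x i (x j)

/-- Inner product of two `p × n` matrices. -/
def mInner {n p : ℕ} (P Q : Fin p → Fin n → ℝ) : ℝ :=
  ∑ i, ∑ j, P i j * Q i j

/-- Hadamard (entrywise) product. -/
def hadamard {n p : ℕ} (P Q : Fin p → Fin n → ℝ) : Fin p → Fin n → ℝ :=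
  fun i j => P i j * Q i j

/-- The matrix `Φ` of reciprocals of the entries of `Σ`. -/
noncomputable def PhiMat {n p : ℕ} (σ : Fin p → Fin n → ℝ) : Fin p → Fin n → ℝ :=
  fun i j => 1 / σ i j

/-- `L_Φ(x,y) = ‖Φ*(A_x − A_y)‖²`. -/
noncomputable def LPhi {n k p : ℕ} (θ : (Fin n → Fin k) → Fin p → Fin k → ℝ)
    (σ : Fin p → Fin n → ℝ) (x y : Fin n → Fin k) : ℝ :=
  mInner (hadamard (PhiMat σ) (fun i j => matA θ x i j - matA θ y i j))
    (hadamard (PhiMat σ) (fun i j => matA θ x i j - matA θ y i j))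

/-- `f(x) = −2⟨Φ*K, Φ*A_x⟩ + ‖Φ*A_x‖²` for a fixed observation matrix `K`. -/
noncomputable def fStat {n k p : ℕ} (θ : (Fin n → Fin k) → Fin p → Fin k → ℝ)
    (σ : Fin p → Fin n → ℝ) (K : Fin p → Fin n → ℝ) (x : Fin n → Fin k) : ℝ :=
  -2 * mInner (hadamard (PhiMat σ) K) (hadamard (PhiMat σ) (matA θ x)) +
    mInner (hadamard (PhiMat σ) (matA θ x)) (hadamard (PhiMat σ) (matA θ x))

/-- The observation `K_y = A_y + Σ*W` for a noise realization `W`. -/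
def obsK {n k p : ℕ} (θ : (Fin n → Fin k) → Fin p → Fin k → ℝ)
    (σ : Fin p → Fin n → ℝ) (y : Fin n → Fin k) (W : Fin p → Fin n → ℝ) :
    Fin p → Fin n → ℝ :=
  fun i j => matA θ y i j + σ i j * W i j

/-- `x' ∈ C(x)`: `x'` is equivalent to `x`. -/
def equivC {n k p : ℕ} (θ : (Fin n → Fin k) → Fin p → Fin k → ℝ)
    (x x' : Fin n → Fin k) : Prop :=
  (∀ i j : Fin n, x i = x j ↔ x' i = x' j) ∧
    ∀ (i : Fin p) (j : Fin n), θ x i (x j) = θ x' i (x' j)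


section Stmt9Helpers

open Finset MeasureTheory ProbabilityTheory Real

private lemma gauss_pdf_shift' (s x : ℝ) :
    gaussianPDFReal 0 1 x * Real.exp (s * x) = Real.exp (s^2/2) * gaussianPDFReal s 1 x := by
  simp only [gaussianPDFReal, NNReal.coe_one, mul_one, sub_zero]
  rw [mul_comm _ (Real.exp (s*x)), ← mul_assoc, mul_comm (Real.exp (s*x)), mul_assoc,
    ← Real.exp_add, mul_comm (Real.exp (s^2/2)), mul_assoc, ← Real.exp_add]
  congr 1
  ring_nf

private lemma gauss_exp_int' (s : ℝ) :
    Integrable (fun x => Real.exp (s * x)) (gaussianReal 0 1) ∧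
    ∫ x, Real.exp (s * x) ∂(gaussianReal 0 1) = Real.exp (s^2/2) := by
  have h1 : gaussianReal 0 1 = MeasureTheory.volume.withDensity
      (fun x => ((gaussianPDFReal 0 1 x).toNNReal : ENNReal)) := by
    rw [gaussianReal_of_var_ne_zero 0 one_ne_zero]
    rfl
  have hmeas : Measurable (fun x => (gaussianPDFReal 0 1 x).toNNReal) :=
    (measurable_gaussianPDFReal 0 1).real_toNNReal
  have hsmul : ∀ x : ℝ, (gaussianPDFReal 0 1 x).toNNReal • Real.exp (s * x)
      = Real.exp (s^2/2) * gaussianPDFReal s 1 x := by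
    intro x
    rw [NNReal.smul_def, Real.coe_toNNReal _ (gaussianPDFReal_nonneg 0 1 x)]
    exact gauss_pdf_shift' s x
  constructor
  · rw [h1, integrable_withDensity_iff_integrable_smul hmeas]
    refine ((integrable_gaussianPDFReal s 1).const_mul (Real.exp (s^2/2))).congr ?_
    exact Filter.Eventually.of_forall fun x => (hsmul x).symm
  · rw [h1, integral_withDensity_eq_integral_smul hmeas]
    simp_rw [hsmul]
    rw [integral_const_mul, integral_gaussianPDFReal_eq_one s one_ne_zero, mul_one]

private lemma gauss_comp_int' {Ω' : Type*} [MeasurableSpace Ω'] (μ : Measure Ω')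
    (X : Ω' → ℝ) (hX : Measurable X) (hmap : Measure.map X μ = gaussianReal 0 1) (s : ℝ) :
    Integrable (fun ω => Real.exp (s * X ω)) μ ∧
    ∫ ω, Real.exp (s * X ω) ∂μ = Real.exp (s^2/2) := by
  have hg := gauss_exp_int' s
  constructor
  · have := hg.1
    rw [← hmap] at this
    exact (integrable_map_measure this.aestronglyMeasurable hX.aemeasurable).mp this
  · have hfm : AEStronglyMeasurable (fun y => Real.exp (s*y)) (Measure.map X μ) := by
      rw [hmap]; exact hg.1.aestronglyMeasurable
    have h2 := integral_map hX.aemeasurable hfm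
    rw [hmap] at h2
    rw [← h2]
    exact hg.2

private lemma mgf_const_mul_gauss' {Ω' : Type*} [MeasurableSpace Ω'] (μ : Measure Ω')
    (X : Ω' → ℝ) (hX : Measurable X) (hmap : Measure.map X μ = gaussianReal 0 1) (c t : ℝ) :
    mgf (fun ω => c * X ω) μ t = Real.exp ((t*c)^2/2) ∧
    Integrable (fun ω => Real.exp (t * (c * X ω))) μ := by
  have h := gauss_comp_int' μ X hX hmap (t * c)
  constructor
  · rw [mgf]
    simp_rw [← mul_assoc]
    exact h.2
  · simp_rw [← mul_assoc]
    exact h.1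

end Stmt9Helpers

/-- `Pr(f(x) − f(y) ≤ 0) ≤ exp(−L_Φ(x,y)/8)` for every `x`; consequently, for
`S ⊆ Ω` and a system `R` of representatives of the equivalence classes of elements of `S` not
equivalent to `y`, the probability that some `x ∈ S` with `C(x) ≠ C(y)` has `f(x) ≤ f(y)` is
at most `Σ_{r ∈ R} exp(−L_Φ(r,y)/8)`; in particular `1 − Pr(f(y) < min ...)` is bounded by
this sum. -/
theorem stmt9 {n k p : ℕ} (hkn : k ≤ n) (hk : 2 ≤ k) (hp : 1 ≤ p)
    (θ : (Fin n → Fin k) → Fin p → Fin k → ℝ)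
    (σ : Fin p → Fin n → ℝ) (hσ : ∀ i j, 0 < σ i j)
    {Ω' : Type*} [MeasurableSpace Ω'] (μ : Measure Ω') [IsProbabilityMeasure μ]
    (W : Ω' → Fin p → Fin n → ℝ)
    (hWmeas : ∀ i j, Measurable fun ω => W ω i j)
    (hWindep : iIndepFun
      (fun (ij : Fin p × Fin n) ω => W ω ij.1 ij.2) μ)
    (hWgauss : ∀ i j, Measure.map (fun ω => W ω i j) μ = gaussianReal 0 1)
    (y : Fin n → Fin k)
    (S : Finset (Fin n → Fin k)) (R : Finset (Fin n → Fin k))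
    (hRS : ∀ x ∈ S, ¬ equivC θ y x → ∃ r ∈ R, equivC θ r x)
    (hRy : ∀ r ∈ R, ¬ equivC θ y r)
    (hRrep : ∀ r ∈ R, ∀ r' ∈ R, equivC θ r r' → r = r') :
    (∀ x : Fin n → Fin k,
        μ {ω | fStat θ σ (obsK θ σ y (W ω)) x - fStat θ σ (obsK θ σ y (W ω)) y ≤ 0} ≤
          ENNReal.ofReal (Real.exp (-(LPhi θ σ x y) / 8))) ∧
    μ {ω | ∃ x ∈ S, ¬ equivC θ y x ∧
        fStat θ σ (obsK θ σ y (W ω)) x ≤ fStat θ σ (obsK θ σ y (W ω)) y} ≤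
      ∑ r ∈ R, ENNReal.ofReal (Real.exp (-(LPhi θ σ r y) / 8)) ∧
    1 - μ {ω | ∀ x ∈ S, ¬ equivC θ y x →
        fStat θ σ (obsK θ σ y (W ω)) y < fStat θ σ (obsK θ σ y (W ω)) x} ≤
      ∑ r ∈ R, ENNReal.ofReal (Real.exp (-(LPhi θ σ r y) / 8)) := by
  classical
  have part1 : ∀ x : Fin n → Fin k,
      μ {ω | fStat θ σ (obsK θ σ y (W ω)) x - fStat θ σ (obsK θ σ y (W ω)) y ≤ 0} ≤
        ENNReal.ofReal (Real.exp (-(LPhi θ σ x y) / 8)) := by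
    intro x
    set L := LPhi θ σ x y with hLdef
    set D : Fin p → Fin n → ℝ := fun i j => (1 / σ i j) * (matA θ x i j - matA θ y i j)
      with hD
    set Xf : Fin p × Fin n → Ω' → ℝ := fun ij ω => D ij.1 ij.2 * W ω ij.1 ij.2 with hXf
    have hmeasXf : ∀ ij, Measurable (Xf ij) := fun ij => (hWmeas ij.1 ij.2).const_mul _
    have hindep : iIndepFun Xf μ :=
      hWindep.comp (fun ij (u : ℝ) => D ij.1 ij.2 * u) (fun ij => measurable_const_mul _)
    have hmgfint : ∀ ij : Fin p × Fin n,
        mgf (Xf ij) μ (1/2) = Real.exp (((1/2) * D ij.1 ij.2)^2/2) ∧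
        Integrable (fun ω => Real.exp ((1/2) * Xf ij ω)) μ := by
      intro ij
      have h := mgf_const_mul_gauss' μ (fun ω => W ω ij.1 ij.2) (hWmeas ij.1 ij.2)
        (hWgauss ij.1 ij.2) (D ij.1 ij.2) (1/2)
      exact ⟨h.1, h.2⟩
    have hint : Integrable (fun ω => Real.exp ((1/2) * (∑ ij, Xf ij) ω)) μ :=
      hindep.integrable_exp_mul_sum hmeasXf (fun ij _ => (hmgfint ij).2)
    have hL : L = ∑ ij : Fin p × Fin n, (D ij.1 ij.2)^2 := by
      rw [hLdef]
      simp only [LPhi, mInner, hadamard, PhiMat, matA, Fintype.sum_prod_type, hD, sq]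
    have hmgf : mgf (∑ ij, Xf ij) μ (1/2) = Real.exp (L/8) := by
      rw [hindep.mgf_sum hmeasXf]
      calc (∏ ij, mgf (Xf ij) μ (1/2))
          = ∏ ij : Fin p × Fin n, Real.exp (((1/2) * D ij.1 ij.2)^2/2) :=
            Finset.prod_congr rfl fun ij _ => (hmgfint ij).1
        _ = Real.exp (∑ ij : Fin p × Fin n, ((1/2) * D ij.1 ij.2)^2/2) := by
            rw [Real.exp_sum]
        _ = Real.exp (L/8) := by
            congr 1
            rw [hL, Finset.sum_div]
            exact Finset.sum_congr rfl fun ij _ => by ring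
    have key : ∀ ω, fStat θ σ (obsK θ σ y (W ω)) x - fStat θ σ (obsK θ σ y (W ω)) y
        = L - 2 * (∑ ij, Xf ij) ω := by
      intro ω
      rw [Finset.sum_apply, hLdef]
      simp only [hXf, hD]
      simp only [fStat, LPhi, mInner, hadamard, PhiMat, matA, obsK, Fintype.sum_prod_type]
      simp only [mul_sum, ← Finset.sum_sub_distrib, ← Finset.sum_add_distrib]
      refine Finset.sum_congr rfl fun i _ => Finset.sum_congr rfl fun j _ => ?_
      have hs : σ i j ≠ 0 := (hσ i j).ne'
      field_simp
      ring
    have hset : {ω | fStat θ σ (obsK θ σ y (W ω)) x - fStat θ σ (obsK θ σ y (W ω)) y ≤ 0}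
        = {ω | L/2 ≤ (∑ ij, Xf ij) ω} := by
      ext ω
      simp only [Set.mem_setOf_eq, key ω]
      constructor <;> intro h <;> linarith
    have hcher := measure_ge_le_exp_mul_mgf (μ := μ) (X := ∑ ij, Xf ij) (t := 1/2)
      (L/2) (by norm_num) hint
    rw [hmgf] at hcher
    have h2 : Real.exp (-(1/2) * (L/2)) * Real.exp (L/8) = Real.exp (-L/8) := by
      rw [← Real.exp_add]; congr 1; ring
    rw [h2] at hcher
    rw [hset, ← ENNReal.ofReal_toReal (measure_ne_top μ _)]
    exact ENNReal.ofReal_le_ofReal hcher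
  have part2 : μ {ω | ∃ x ∈ S, ¬ equivC θ y x ∧
      fStat θ σ (obsK θ σ y (W ω)) x ≤ fStat θ σ (obsK θ σ y (W ω)) y} ≤
      ∑ r ∈ R, ENNReal.ofReal (Real.exp (-(LPhi θ σ r y) / 8)) := by
    have hsub : {ω | ∃ x ∈ S, ¬ equivC θ y x ∧
        fStat θ σ (obsK θ σ y (W ω)) x ≤ fStat θ σ (obsK θ σ y (W ω)) y} ⊆
        ⋃ r ∈ R, {ω | fStat θ σ (obsK θ σ y (W ω)) r - fStat θ σ (obsK θ σ y (W ω)) y ≤ 0} := by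
      intro ω hω
      obtain ⟨x, hxS, hxny, hle⟩ := hω
      obtain ⟨r, hrR, hrx⟩ := hRS x hxS hxny
      have hmA : matA θ r = matA θ x := by
        funext i j
        exact hrx.2 i j
      have hfeq : ∀ K, fStat θ σ K r = fStat θ σ K x := by
        intro K
        rw [fStat, fStat, hmA]
      refine Set.mem_biUnion hrR ?_
      simp only [Set.mem_setOf_eq, hfeq]
      linarith
    calc μ _ ≤ μ (⋃ r ∈ R, {ω | fStat θ σ (obsK θ σ y (W ω)) r -
            fStat θ σ (obsK θ σ y (W ω)) y ≤ 0}) := measure_mono hsub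
      _ ≤ ∑ r ∈ R, μ {ω | fStat θ σ (obsK θ σ y (W ω)) r -
            fStat θ σ (obsK θ σ y (W ω)) y ≤ 0} := measure_biUnion_finset_le R _
      _ ≤ ∑ r ∈ R, ENNReal.ofReal (Real.exp (-(LPhi θ σ r y) / 8)) :=
            Finset.sum_le_sum fun r _ => part1 r
  refine ⟨part1, part2, ?_⟩
  set B := {ω | ∀ x ∈ S, ¬ equivC θ y x →
      fStat θ σ (obsK θ σ y (W ω)) y < fStat θ σ (obsK θ σ y (W ω)) x} with hB
  have hcompl : Bᶜ ⊆ {ω | ∃ x ∈ S, ¬ equivC θ y x ∧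
      fStat θ σ (obsK θ σ y (W ω)) x ≤ fStat θ σ (obsK θ σ y (W ω)) y} := by
    intro ω hω
    simp only [hB, Set.mem_compl_iff, Set.mem_setOf_eq, not_forall, not_lt] at hω
    obtain ⟨x, hxS, hxny, hle⟩ := hω
    exact ⟨x, hxS, hxny, hle⟩
  have h1 : (1 : ENNReal) ≤ μ Bᶜ + μ B := by
    have := measure_union_le (μ := μ) Bᶜ B
    rwa [Set.compl_union_self, measure_univ] at this
  calc 1 - μ B ≤ μ Bᶜ := tsub_le_iff_right.mpr h1
    _ ≤ μ {ω | ∃ x ∈ S, ¬ equivC θ y x ∧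
        fStat θ σ (obsK θ σ y (W ω)) x ≤ fStat θ σ (obsK θ σ y (W ω)) y} := measure_mono hcompl
    _ ≤ ∑ r ∈ R, ENNReal.ofReal (Real.exp (-(LPhi θ σ r y) / 8)) := part2
end

section
/- Let G_1,...,G_N be independent Gaussian random variables with mean 0, and let ε ∈ (0,1). Suppose N and ε satisfy N^{ε−ε²}·(1−ε)·√(2·log N) / (√(2π)·(1 + 2(1−ε)²·log N)) > 1. Then Pr(max_{i∈[N]} G_i < (1−ε)·√(2·min_{j∈[N]} Var(G_j)·log N)) ≤ exp(−N^{ε}). -/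
open MeasureTheory ProbabilityTheory

section Aux
open Real Filter

open MeasureTheory ProbabilityTheory Real Filter

noncomputable def phi (x : ℝ) : ℝ := (Real.sqrt (2*Real.pi))⁻¹ * Real.exp (-x^2/2)

lemma phi_eq : gaussianPDFReal 0 1 = phi := by
  funext x
  simp [gaussianPDFReal, phi]

lemma phi_nonneg (x : ℝ) : 0 ≤ phi x := by
  unfold phi; positivity

lemma phi_cont : Continuous phi := by
  unfold phi; fun_prop

lemma hasDerivAt_mills (x : ℝ) :
    HasDerivAt (fun y => -(phi y * (y/(1+y^2))))
      (phi x * ((x^4+2*x^2-1)/(1+x^2)^2)) x := by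
  have hden : (1:ℝ) + x^2 ≠ 0 := by positivity
  have h0 : HasDerivAt (fun y : ℝ => -y^2/2) (-x) x := by
    have : HasDerivAt (fun y : ℝ => -y^2/2) _ x := ((hasDerivAt_pow 2 x).neg.div_const 2)
    convert this using 1
    ring
  have hφ : HasDerivAt (fun y => (Real.sqrt (2*Real.pi))⁻¹ * Real.exp (-y^2/2))
      ((Real.sqrt (2*Real.pi))⁻¹ * (Real.exp (-x^2/2) * (-x))) x := (h0.exp.const_mul _)
  have hr : HasDerivAt (fun y : ℝ => y/(1+y^2))
      ((1*(1+x^2) - x*(2*x))/(1+x^2)^2) x := by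
    have h2 : HasDerivAt (fun y : ℝ => 1 + y^2) (2*x) x := by
      have : HasDerivAt (fun y : ℝ => 1 + y^2) _ x := (hasDerivAt_pow 2 x).const_add 1
      convert this using 1
      push_cast; ring
    exact (hasDerivAt_id x).div h2 hden
  have : HasDerivAt (fun y => -(phi y * (y/(1+y^2)))) _ x := (hφ.mul hr).neg
  convert this using 1
  unfold phi
  field_simp
  ring

lemma mills_lb {a : ℝ} (ha : 0 ≤ a) :
    phi a * (a/(1+a^2)) ≤ ∫ x in Set.Ioi a, phi x := by
  set f' : ℝ → ℝ := fun x => phi x * ((x^4+2*x^2-1)/(1+x^2)^2) with hf'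
  have hphi_int : IntegrableOn phi (Set.Ioi a) := by
    rw [← phi_eq]; exact (integrable_gaussianPDFReal 0 1).integrableOn
  have hf'cont : Continuous f' := by
    apply phi_cont.mul
    apply Continuous.div (by fun_prop) (by fun_prop)
    intro x; positivity
  have hf'int : IntegrableOn f' (Set.Ioi a) := by
    apply Integrable.mono hphi_int hf'cont.aestronglyMeasurable
    filter_upwards with x
    rw [Real.norm_eq_abs, Real.norm_eq_abs, abs_mul, abs_of_nonneg (phi_nonneg x)]
    have : |(x^4+2*x^2-1)/(1+x^2)^2| ≤ 1 := by
      rw [abs_div, abs_of_nonneg (by positivity : (0:ℝ) ≤ (1+x^2)^2), div_le_one (by positivity)]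
      rw [abs_le]
      constructor <;> nlinarith [sq_nonneg x, sq_nonneg (x^2)]
    calc phi x * |(x^4+2*x^2-1)/(1+x^2)^2| ≤ phi x * 1 :=
          mul_le_mul_of_nonneg_left this (phi_nonneg x)
      _ = phi x := mul_one _
  have htend : Tendsto (fun y => -(phi y * (y/(1+y^2)))) atTop (nhds 0) := by
    rw [← neg_zero]
    apply Tendsto.neg
    apply squeeze_zero' (g := fun x => (Real.sqrt (2*Real.pi))⁻¹ * Real.exp (-x^2/2))
    · filter_upwards [eventually_ge_atTop (0:ℝ)] with x hx
      have := phi_nonneg x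
      positivity
    · filter_upwards [eventually_ge_atTop (0:ℝ)] with x hx
      unfold phi
      have h1 : x/(1+x^2) ≤ 1 := by
        rw [div_le_one (by positivity)]; nlinarith
      have h2 : 0 ≤ (Real.sqrt (2*Real.pi))⁻¹ * Real.exp (-x^2/2) := by positivity
      calc (Real.sqrt (2*Real.pi))⁻¹ * Real.exp (-x^2/2) * (x/(1+x^2))
          ≤ (Real.sqrt (2*Real.pi))⁻¹ * Real.exp (-x^2/2) * 1 :=
            mul_le_mul_of_nonneg_left h1 h2
        _ = _ := mul_one _
    · rw [show (0:ℝ) = (Real.sqrt (2*Real.pi))⁻¹ * 0 by ring]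
      apply Tendsto.const_mul
      apply Real.tendsto_exp_atBot.comp
      have : Tendsto (fun x : ℝ => x^2/2) atTop atTop :=
        (tendsto_pow_atTop two_ne_zero).atTop_div_const (by norm_num)
      apply tendsto_neg_atBot_iff.mpr at this
      convert this using 2
      ring
  have key : ∫ x in Set.Ioi a, f' x = phi a * (a/(1+a^2)) := by
    rw [integral_Ioi_of_hasDerivAt_of_tendsto' (fun x _ => hasDerivAt_mills x) hf'int htend]
    ring
  rw [← key]
  apply setIntegral_mono_on hf'int hphi_int measurableSet_Ioi
  intro x _
  have : (x^4+2*x^2-1)/(1+x^2)^2 ≤ 1 := by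
    rw [div_le_one (by positivity)]; nlinarith
  calc f' x ≤ phi x * 1 := mul_le_mul_of_nonneg_left this (phi_nonneg x)
    _ = phi x := mul_one _


lemma gaussian_tail_scale {v : NNReal} (hv : v ≠ 0) (t : ℝ) :
    gaussianReal 0 v (Set.Ici t) = gaussianReal 0 1 (Set.Ici (t / Real.sqrt v)) := by
  have hvpos : (0:ℝ) < (v:ℝ) := by exact_mod_cast pos_iff_ne_zero.mpr hv
  have hc : (0:ℝ) < Real.sqrt v := Real.sqrt_pos.mpr hvpos
  have h1 : (⟨(Real.sqrt v)^2, sq_nonneg _⟩ : NNReal) * 1 = v := by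
    ext
    simp [Real.sq_sqrt hvpos.le]
  have h2 := gaussianReal_map_const_mul (μ := 0) (v := 1) (Real.sqrt v)
  rw [mul_zero] at h2
  erw [h1] at h2
  rw [← h2, Measure.map_apply (measurable_const_mul _) measurableSet_Ici]
  congr 1
  ext x
  simp only [Set.mem_preimage, Set.mem_Ici]
  rw [div_le_iff₀ hc, mul_comm]

lemma gaussian_tail_lb (a : ℝ) (hm : phi a * (a/(1+a^2)) ≤ ∫ x in Set.Ioi a, phi x)
    (hphieq : gaussianPDFReal 0 1 = phi) :
    ENNReal.ofReal (phi a * (a/(1+a^2))) ≤ gaussianReal 0 1 (Set.Ici a) := by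
  rw [gaussianReal_apply_eq_integral 0 one_ne_zero, hphieq]
  apply ENNReal.ofReal_le_ofReal
  rwa [integral_Ici_eq_integral_Ioi]

end Aux

/-- for independent centered Gaussian random variables `G₁,…,G_N` and
`ε ∈ (0,1)` with `N^{ε−ε²}·(1−ε)·√(2·log N)/(√(2π)·(1+2(1−ε)²·log N)) > 1`,
`Pr(max_i G_i < (1−ε)·√(2·min_j Var(G_j)·log N)) ≤ exp(−N^ε)`. -/
theorem stmt15 {Ω : Type*} [MeasurableSpace Ω] (μ : Measure Ω) [IsProbabilityMeasure μ]
    (N : ℕ) (hN : 2 ≤ N)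
    (G : Fin N → Ω → ℝ) (v : Fin N → NNReal)
    (hGmeas : ∀ i, Measurable (G i))
    (hGindep : iIndepFun G μ)
    (hG : ∀ i, Measure.map (G i) μ = gaussianReal 0 (v i))
    (ε : ℝ) (hε : ε ∈ Set.Ioo (0 : ℝ) 1)
    (hNε : 1 < (N : ℝ) ^ (ε - ε ^ 2) * (1 - ε) * Real.sqrt (2 * Real.log N) /
        (Real.sqrt (2 * Real.pi) * (1 + 2 * (1 - ε) ^ 2 * Real.log N))) :
    μ {ω | Finset.univ.sup' (Finset.univ_nonempty_iff.mpr ⟨⟨0, by omega⟩⟩)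
          (fun i => G i ω) <
        (1 - ε) * Real.sqrt
          (2 * (Finset.univ.inf' (Finset.univ_nonempty_iff.mpr ⟨⟨0, by omega⟩⟩)
              fun j => ((v j : ℝ))) * Real.log N)} ≤
      ENNReal.ofReal (Real.exp (-(N : ℝ) ^ ε)) := by
  have hne : (Finset.univ : Finset (Fin N)).Nonempty :=
    Finset.univ_nonempty_iff.mpr ⟨⟨0, by omega⟩⟩
  obtain ⟨j, -, hj⟩ := Finset.exists_mem_eq_inf' hne (fun j => ((v j : ℝ)))
  set σ2 : ℝ := Finset.univ.inf' hne (fun j => ((v j : ℝ))) with hσ2def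
  have hNpos : (0:ℝ) < N := by positivity
  have hN1 : (1:ℝ) < N := by exact_mod_cast hN.trans_lt' one_lt_two
  have hlogN : 0 < Real.log N := Real.log_pos hN1
  have hε0 : 0 < ε := hε.1
  have hε1 : 0 < 1 - ε := by linarith [hε.2]
  set t : ℝ := (1 - ε) * Real.sqrt (2 * σ2 * Real.log N) with htdef
  by_cases hvj : v j = 0
  · -- degenerate case: some variance is zero, so t = 0 and the event has measure 0
    have hσ20 : σ2 = 0 := by rw [hj, hvj]; simp
    have ht0 : t = 0 := by rw [htdef, hσ20]; simp
    have hsub : {ω | Finset.univ.sup' hne (fun i => G i ω) < t} ⊆ G j ⁻¹' Set.Iio 0 := by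
      intro ω hω
      simp only [Set.mem_setOf_eq] at hω
      have := Finset.le_sup' (fun i => G i ω) (Finset.mem_univ j)
      simp only [Set.mem_preimage, Set.mem_Iio]
      rw [ht0] at hω
      exact lt_of_le_of_lt this hω
    calc μ _ ≤ μ (G j ⁻¹' Set.Iio 0) := measure_mono hsub
      _ = gaussianReal 0 (v j) (Set.Iio 0) := by
          rw [← hG j, Measure.map_apply (hGmeas j) measurableSet_Iio]
      _ = 0 := by rw [hvj, gaussianReal_zero_var]; simp
      _ ≤ _ := zero_le
  · -- main case
    have hσ2pos : 0 < σ2 := by rw [hj]; exact_mod_cast pos_iff_ne_zero.mpr hvj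
    set a : ℝ := (1 - ε) * Real.sqrt (2 * Real.log N) with hadef
    have ha : 0 < a := by positivity
    have haa : a^2 = (1-ε)^2 * (2 * Real.log N) := by
      rw [hadef, mul_pow, Real.sq_sqrt (by positivity)]
    set p : ℝ := phi a * (a/(1+a^2)) with hpdef
    have hppos : 0 < p := by
      rw [hpdef]
      unfold phi
      positivity
    have hta : t = Real.sqrt σ2 * a := by
      rw [htdef, hadef, show 2 * σ2 * Real.log N = σ2 * (2 * Real.log N) by ring,
        Real.sqrt_mul hσ2pos.le]
      ring
    have ht0 : 0 ≤ t := by rw [hta]; positivity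
    -- key arithmetic: N^ε ≤ N * p
    have hNp : (N:ℝ) ^ ε ≤ N * p := by
      have hexp : Real.exp (-a^2/2) = (N:ℝ) ^ (-(1-ε)^2) := by
        rw [Real.rpow_def_of_pos hNpos]
        congr 1
        rw [haa]; ring
      have hsplit : (N:ℝ) = (N:ℝ)^ε * (N:ℝ)^(ε-ε^2) * (N:ℝ)^((1-ε)^2) := by
        rw [← Real.rpow_add hNpos, ← Real.rpow_add hNpos,
          show ε + (ε - ε^2) + (1-ε)^2 = 1 by ring, Real.rpow_one]
      have h1a : 1 + a^2 = 1 + 2*(1-ε)^2 * Real.log N := by rw [haa]; ring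
      have hQ := hNε
      have hD : 0 < Real.sqrt (2*Real.pi) * (1 + 2*(1-ε)^2 * Real.log N) := by
        have := Real.pi_pos
        positivity
      have hNe : 0 < (N:ℝ)^ε := Real.rpow_pos_of_pos hNpos ε
      have hN1e : 0 < (N:ℝ)^((1-ε)^2) := Real.rpow_pos_of_pos hNpos _
      have key : (N:ℝ) * p =
          (N:ℝ)^ε * ((N : ℝ) ^ (ε - ε ^ 2) * (1 - ε) * Real.sqrt (2 * Real.log N) /
            (Real.sqrt (2 * Real.pi) * (1 + 2 * (1 - ε) ^ 2 * Real.log N))) := by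
        rw [hpdef]
        unfold phi
        rw [hexp, Real.rpow_neg hNpos.le, h1a, hadef]
        have hs2pi : 0 < Real.sqrt (2*Real.pi) := Real.sqrt_pos.mpr (by positivity)
        set x := (N:ℝ)^ε with hx
        set y := (N:ℝ)^(ε-ε^2) with hy
        set z := (N:ℝ)^((1-ε)^2) with hz
        set L := Real.log (N:ℝ) with hL
        set W := Real.sqrt (2*Real.pi) with hWd
        rw [hsplit]
        have hz0 : z ≠ 0 := hN1e.ne'
        have hW0 : W ≠ 0 := hs2pi.ne'
        have hden : (0:ℝ) < 1 + 2*(1-ε)^2*L := by nlinarith [hlogN, sq_nonneg (1-ε)]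
        field_simp
      rw [key]
      exact le_mul_of_one_le_right hNe.le hNε.le
    -- per-coordinate bound
    have hcoord : ∀ i : Fin N, μ (G i ⁻¹' Set.Iio t) ≤ ENNReal.ofReal (Real.exp (-p)) := by
      intro i
      have hvi : σ2 ≤ (v i : ℝ) := Finset.inf'_le _ (Finset.mem_univ i)
      have hvine : v i ≠ 0 := by
        intro h
        rw [h] at hvi
        simp at hvi
        linarith
      have hvipos : (0:ℝ) < (v i : ℝ) := lt_of_lt_of_le hσ2pos hvi
      have htail : ENNReal.ofReal p ≤ gaussianReal 0 (v i) (Set.Ici t) := by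
        rw [gaussian_tail_scale hvine t]
        refine le_trans (gaussian_tail_lb a (mills_lb ha.le) phi_eq) (measure_mono ?_)
        apply Set.Ici_subset_Ici.mpr
        rw [div_le_iff₀ (Real.sqrt_pos.mpr hvipos), hta, mul_comm a]
        exact mul_le_mul_of_nonneg_right (Real.sqrt_le_sqrt hvi) ha.le
      have hmap : μ (G i ⁻¹' Set.Iio t) = gaussianReal 0 (v i) (Set.Iio t) := by
        rw [← hG i, Measure.map_apply (hGmeas i) measurableSet_Iio]
      rw [hmap, show Set.Iio t = (Set.Ici t)ᶜ by simp,
        prob_compl_eq_one_sub measurableSet_Ici]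
      calc (1:ENNReal) - gaussianReal 0 (v i) (Set.Ici t)
          ≤ 1 - ENNReal.ofReal p := tsub_le_tsub_left htail 1
        _ = ENNReal.ofReal (1 - p) := by
            rw [ENNReal.ofReal_sub 1 hppos.le, ENNReal.ofReal_one]
        _ ≤ ENNReal.ofReal (Real.exp (-p)) := by
            apply ENNReal.ofReal_le_ofReal
            linarith [Real.add_one_le_exp (-p)]
    -- assemble via independence
    have hevent : {ω | Finset.univ.sup' hne (fun i => G i ω) < t} =
        ⋂ i, G i ⁻¹' Set.Iio t := by
      ext ω
      simp [Finset.sup'_lt_iff]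
    calc μ {ω | Finset.univ.sup' hne (fun i => G i ω) < t}
        = ∏ i, μ (G i ⁻¹' Set.Iio t) := by
          rw [hevent]
          exact hGindep.meas_iInter (fun i => ⟨Set.Iio t, measurableSet_Iio, rfl⟩)
      _ ≤ ∏ _i : Fin N, ENNReal.ofReal (Real.exp (-p)) :=
          Finset.prod_le_prod' (fun i _ => hcoord i)
      _ = (ENNReal.ofReal (Real.exp (-p)))^N := by
          rw [Finset.prod_const, Finset.card_univ, Fintype.card_fin]
      _ = ENNReal.ofReal ((Real.exp (-p))^N) := by
          rw [ENNReal.ofReal_pow (Real.exp_nonneg _)]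
      _ ≤ ENNReal.ofReal (Real.exp (-(N : ℝ) ^ ε)) := by
          apply ENNReal.ofReal_le_ofReal
          rw [← Real.exp_nat_mul]
          apply Real.exp_le_exp.mpr
          nlinarith [hNp]
end

section
/- In the hypergraph model, let y ∈ Ω be the true community assignment, H ⊆ [n], and for a ∈ H let y^{(a)} ∈ Ω agree with y off a and satisfy y^{(a)}(a) ≠ y(a). Partition the index set ∪_{s=s_1}^{s_2}[n]^s into 𝒳 (tuples with no coordinate in H), 𝒴 (tuples with exactly one coordinate in H), and 𝒵 (tuples with at least two coordinates in H); for η ∈ {𝒳,𝒴,𝒵} let W_η agree with W on η and vanish elsewhere, and set 𝒳_a := ⟨W_𝒳, Φ*(A_{y^{(a)}} − A_y)⟩, 𝒴_a := ⟨W_𝒴, Φ*(A_{y^{(a)}} − A_y)⟩, 𝒵_a := ⟨W_𝒵, Φ*(A_{y^{(a)}} − A_y)⟩. Then: (1) 𝒳_a = 0 for every a ∈ H; (2) for each a ∈ H, 𝒴_a and 𝒵_a are independent; (3) {𝒴_g}_{g∈H} is a collection of independent centered Gaussian random variables, and Var(𝒴_g) = Σ_{s=s_1}^{s_2} Σ_{j=1}^{s}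 Σ over (i_1,...,i_{j−1},i_{j+1},...,i_s) ∈ ([n]\H)^{s−1} of σ^{−2}_{(i_1,...,g,...,i_s)} · (φ(y(i_1),...,y^{(g)}(g),...,y(i_s)) − φ(y(i_1),...,y(g),...,y(i_s)))². -/
open Finset MeasureTheory ProbabilityTheory

/-- `L_Φ(x,y)` for the hypergraph model. -/
noncomputable def hLPhi {n k : ℕ} (s₁ s₂ : ℕ)
    (φ : (s : ℕ) → (Fin s → Fin k) → ℝ)
    (σ : (s : ℕ) → (Fin s → Fin n) → ℝ)
    (x y : Fin n → Fin k) : ℝ :=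
  ∑ s ∈ Finset.Icc s₁ s₂, ∑ t : Fin s → Fin n,
    (φ s (x ∘ t) - φ s (y ∘ t)) ^ 2 / (σ s t) ^ 2

/-- Equivalence of community assignments in the hypergraph model. -/
def hEquiv {n k : ℕ} (s₁ s₂ : ℕ) (φ : (s : ℕ) → (Fin s → Fin k) → ℝ)
    (x x' : Fin n → Fin k) : Prop :=
  ∃ η : Fin k → Fin k, Function.Bijective η ∧ x' = η ∘ x ∧
    ∀ s ∈ Finset.Icc s₁ s₂, ∀ t : Fin s → Fin n, φ s (x' ∘ t) = φ s (x ∘ t)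

/-- Space of noise realizations. -/
def HNoise (n : ℕ) : Type := (s : ℕ) → (Fin s → Fin n) → ℝ

instance (n : ℕ) : MeasurableSpace (HNoise n) := by unfold HNoise; infer_instance

/-- Index set of hyperedges of arities in `[s₁, s₂]`. -/
def HIdx (n s₁ s₂ : ℕ) : Type := Σ s : Set.Icc s₁ s₂, (Fin s.1 → Fin n)


/-- Number of coordinates of the tuple `t` lying in `H`. -/
def countH {n s : ℕ} (H : Finset (Fin n)) (t : Fin s → Fin n) : ℕ :=
  (Finset.univ.filter fun r => t r ∈ H).card

/-- `⟨W_η, Φ*(A_{ynew} − A_y)⟩`, where `η` is the set of hyperedges whose number of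
coordinates in `H` satisfies the predicate `cpred`. -/
noncomputable def hProj {n k : ℕ} (s₁ s₂ : ℕ)
    (φ : (s : ℕ) → (Fin s → Fin k) → ℝ)
    (σ : (s : ℕ) → (Fin s → Fin n) → ℝ)
    (y ynew : Fin n → Fin k) (H : Finset (Fin n))
    (cpred : ℕ → Prop) [DecidablePred cpred] (w : HNoise n) : ℝ :=
  ∑ s ∈ Finset.Icc s₁ s₂, ∑ t : Fin s → Fin n,
    if cpred (countH H t) then
      w s t * ((1 / σ s t) * (φ s (ynew ∘ t) - φ s (y ∘ t)))
    else 0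

/-- The variance expression: the sum over hyperedges containing `g` exactly once (at
position `j`) and otherwise avoiding `H` of `σ⁻²·(φ(…y^{(g)}(g)…) − φ(…y(g)…))²`. -/
noncomputable def hVarExpr {n k : ℕ} (s₁ s₂ : ℕ)
    (φ : (s : ℕ) → (Fin s → Fin k) → ℝ)
    (σ : (s : ℕ) → (Fin s → Fin n) → ℝ)
    (y ynew : Fin n → Fin k) (H : Finset (Fin n)) (g : Fin n) : ℝ :=
  ∑ s ∈ Finset.Icc s₁ s₂, ∑ j : Fin s, ∑ t : Fin s → Fin n,
    if t j = g ∧ ∀ r : Fin s, r ≠ j → t r ∉ H then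
      ((1 / σ s t) * (φ s (ynew ∘ t) - φ s (y ∘ t))) ^ 2
    else 0


open Real
open scoped NNReal ENNReal

namespace Stmt16Aux


lemma exponent_split (v₁ v₂ z x : ℝ) (h₁ : 0 < v₁) (h₂ : 0 < v₂) :
    -x^2/(2*v₁) + -(z-x)^2/(2*v₂)
      = -((v₁+v₂)/(2*v₁*v₂)) * (x - v₁*z/(v₁+v₂))^2 + -z^2/(2*(v₁+v₂)) := by
  have hV : v₁ + v₂ ≠ 0 := by positivity
  field_simp
  ring

lemma gauss_conv_real_aux (v₁ v₂ : ℝ≥0) (h₁ : v₁ ≠ 0) (h₂ : v₂ ≠ 0) (z : ℝ) :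
    ∫ x : ℝ, gaussianPDFReal 0 v₁ x * gaussianPDFReal 0 v₂ (z - x)
      = gaussianPDFReal 0 (v₁ + v₂) z := by
  have hv₁ : (0:ℝ) < v₁ := lt_of_le_of_ne v₁.coe_nonneg (by exact_mod_cast (Ne.symm h₁))
  have hv₂ : (0:ℝ) < v₂ := lt_of_le_of_ne v₂.coe_nonneg (by exact_mod_cast (Ne.symm h₂))
  have hV : (0:ℝ) < (v₁:ℝ) + v₂ := by positivity
  set b : ℝ := ((v₁:ℝ)+v₂)/(2*v₁*v₂) with hb
  have hbpos : 0 < b := by positivity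
  set m : ℝ := (v₁:ℝ)*z/((v₁:ℝ)+v₂) with hm
  have key : ∀ x : ℝ, gaussianPDFReal 0 v₁ x * gaussianPDFReal 0 v₂ (z - x)
      = ((Real.sqrt (2*π*v₁))⁻¹ * (Real.sqrt (2*π*v₂))⁻¹ * Real.exp (-z^2/(2*((v₁:ℝ)+v₂))))
        * Real.exp (-b * (x - m)^2) := by
    intro x
    have hsplit : -x^2/(2*(v₁:ℝ)) + -(z-x)^2/(2*(v₂:ℝ))
        = -b*(x-m)^2 + -z^2/(2*((v₁:ℝ)+v₂)) := by
      rw [hb, hm]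
      have := exponent_split v₁ v₂ z x hv₁ hv₂
      linarith [this]
    simp only [gaussianPDFReal, sub_zero]
    rw [mul_mul_mul_comm, ← Real.exp_add, hsplit, Real.exp_add]
    ring
  rw [integral_congr_ae (Filter.Eventually.of_forall key), integral_const_mul]
  have : ∫ x : ℝ, Real.exp (-b * (x - m)^2) = Real.sqrt (π / b) := by
    rw [← integral_gaussian b]
    exact integral_sub_right_eq_self (fun x => Real.exp (-b * x^2)) m
  rw [this]
  simp only [gaussianPDFReal, sub_zero]
  have e1 : (Real.sqrt (2*π*v₁))⁻¹ * (Real.sqrt (2*π*v₂))⁻¹ * Real.exp (-z^2/(2*((v₁:ℝ)+v₂)))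
        * Real.sqrt (π / b) = ((Real.sqrt (2*π*v₁))⁻¹ * (Real.sqrt (2*π*v₂))⁻¹ *
          Real.sqrt (π / b)) * Real.exp (-z^2/(2*((v₁:ℝ)+v₂))) := by ring
  rw [e1]
  have hπ := Real.pi_pos
  have e2 : (Real.sqrt (2*π*v₁))⁻¹ * (Real.sqrt (2*π*v₂))⁻¹ * Real.sqrt (π / b)
      = (Real.sqrt (2*π*((v₁:ℝ)+v₂)))⁻¹ := by
    rw [← Real.sqrt_inv, ← Real.sqrt_inv, ← Real.sqrt_mul (by positivity),
      ← Real.sqrt_mul (by positivity), ← Real.sqrt_inv]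
    congr 1
    rw [hb]
    field_simp
  rw [e2]
  norm_num

lemma gaussianPDFReal_le (v : ℝ≥0) (x : ℝ) :
    gaussianPDFReal 0 v x ≤ (Real.sqrt (2*π*v))⁻¹ := by
  have hπ := Real.pi_pos
  simp only [gaussianPDFReal, sub_zero]
  have h1 : Real.exp (-x^2/(2*(v:ℝ))) ≤ 1 := by
    rw [Real.exp_le_one_iff]
    rcases eq_or_lt_of_le v.coe_nonneg with h | h
    · simp [← h]
    · apply div_nonpos_of_nonpos_of_nonneg
      · simpa using sq_nonneg x
      · positivity
  calc (Real.sqrt (2*π*v))⁻¹ * Real.exp (-x^2/(2*(v:ℝ)))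
      ≤ (Real.sqrt (2*π*v))⁻¹ * 1 := by
        apply mul_le_mul_of_nonneg_left h1 (by positivity)
    _ = _ := by ring

lemma integrable_conv_integrand (v₁ v₂ : ℝ≥0) (z : ℝ) :
    Integrable (fun x : ℝ => gaussianPDFReal 0 v₁ x * gaussianPDFReal 0 v₂ (z - x)) := by
  have : Integrable (fun x : ℝ => gaussianPDFReal 0 v₂ (z - x) * gaussianPDFReal 0 v₁ x) := by
    apply Integrable.bdd_mul (c := (Real.sqrt (2*π*v₂))⁻¹) (integrable_gaussianPDFReal 0 v₁)
    · exact ((measurable_gaussianPDFReal 0 v₂).comp (measurable_const.sub measurable_id)).aestronglyMeasurable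
    · refine Filter.Eventually.of_forall (fun x => ?_)
      rw [Real.norm_eq_abs, abs_of_nonneg (gaussianPDFReal_nonneg _ _ _)]
      exact gaussianPDFReal_le v₂ (z - x)
  exact this.congr (Filter.Eventually.of_forall fun x => mul_comm _ _)

lemma lint_gauss_conv (v₁ v₂ : ℝ≥0) (h₁ : v₁ ≠ 0) (h₂ : v₂ ≠ 0) (z : ℝ) :
    ∫⁻ x : ℝ, gaussianPDF 0 v₁ x * gaussianPDF 0 v₂ (z - x) = gaussianPDF 0 (v₁+v₂) z := by
  simp only [gaussianPDF]
  have : ∀ x : ℝ, ENNReal.ofReal (gaussianPDFReal 0 v₁ x) * ENNReal.ofReal (gaussianPDFReal 0 v₂ (z-x))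
      = ENNReal.ofReal (gaussianPDFReal 0 v₁ x * gaussianPDFReal 0 v₂ (z-x)) := fun x =>
    (ENNReal.ofReal_mul (gaussianPDFReal_nonneg _ _ _)).symm
  simp_rw [this]
  rw [← ofReal_integral_eq_lintegral_ofReal (integrable_conv_integrand v₁ v₂ z)
    (Filter.Eventually.of_forall fun x =>
      mul_nonneg (gaussianPDFReal_nonneg _ _ _) (gaussianPDFReal_nonneg _ _ _)),
    gauss_conv_real_aux v₁ v₂ h₁ h₂ z]

lemma map_add_withDensity (f g : ℝ → ℝ≥0∞) (hf : Measurable f) (hg : Measurable g) :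
    Measure.map (fun p : ℝ × ℝ => p.1 + p.2)
      ((volume.withDensity f).prod (volume.withDensity g))
      = volume.withDensity (fun z => ∫⁻ x, f x * g (z - x)) := by
  ext s hs
  rw [Measure.map_apply measurable_add hs, Measure.prod_apply (measurable_add hs)]
  have step1 : ∀ x : ℝ, (volume.withDensity g) (Prod.mk x ⁻¹' ((fun p : ℝ × ℝ => p.1 + p.2) ⁻¹' s))
      = ∫⁻ z, g (z - x) * s.indicator 1 z := by
    intro x
    have hpre : (Prod.mk x ⁻¹' ((fun p : ℝ × ℝ => p.1 + p.2) ⁻¹' s)) = (fun y => x + y) ⁻¹' s := rfl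
    have hmeas : MeasurableSet ((fun y : ℝ => x + y) ⁻¹' s) := hs.preimage (measurable_id.const_add x)
    rw [hpre, withDensity_apply g hmeas, ← lintegral_indicator hmeas _]
    have : ∀ y : ℝ, ((fun y : ℝ => x + y) ⁻¹' s).indicator g y
        = (fun z => g (z - x) * s.indicator 1 z) (x + y) := by
      intro y
      by_cases h : x + y ∈ s <;> simp [Set.indicator, h]
    simp_rw [this]
    exact lintegral_add_left_eq_self (fun z => g (z - x) * s.indicator 1 z) x
  rw [lintegral_congr step1]
  have hF : Measurable (fun p : ℝ × ℝ => g (p.2 - p.1) * s.indicator 1 p.2) :=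
    (hg.comp (measurable_snd.sub measurable_fst)).mul
      ((measurable_one.indicator hs).comp measurable_snd)
  rw [lintegral_withDensity_eq_lintegral_mul volume hf hF.lintegral_prod_right']
  simp only [Pi.mul_apply]
  have : ∀ x : ℝ, f x * ∫⁻ z, g (z - x) * s.indicator 1 z
      = ∫⁻ z, f x * (g (z - x) * s.indicator 1 z) := by
    intro x
    exact (lintegral_const_mul (f x) (hF.comp (measurable_const.prodMk measurable_id))).symm
  rw [lintegral_congr this]
  rw [lintegral_lintegral_swap (((hf.comp measurable_fst).mul hF)).aemeasurable]
  rw [withDensity_apply _ hs, ← lintegral_indicator hs _]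
  apply lintegral_congr
  intro z
  by_cases h : z ∈ s
  · simp [Set.indicator, h]
  · simp [Set.indicator, h]

lemma gaussianReal_conv (v₁ v₂ : ℝ≥0) :
    Measure.map (fun p : ℝ × ℝ => p.1 + p.2) ((gaussianReal 0 v₁).prod (gaussianReal 0 v₂))
      = gaussianReal 0 (v₁ + v₂) := by
  rcases eq_or_ne v₁ 0 with rfl|h₁
  · rw [gaussianReal_zero_var, Measure.dirac_prod,
      Measure.map_map measurable_add measurable_prodMk_left]
    have : ((fun p : ℝ × ℝ => p.1 + p.2) ∘ Prod.mk (0:ℝ)) = id := by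
      funext y; simp
    rw [this, Measure.map_id, zero_add]
  rcases eq_or_ne v₂ 0 with rfl|h₂
  · rw [gaussianReal_zero_var, Measure.prod_dirac,
      Measure.map_map measurable_add measurable_prodMk_right]
    have : ((fun p : ℝ × ℝ => p.1 + p.2) ∘ (fun x : ℝ => (x, (0:ℝ)))) = id := by
      funext y; simp
    rw [this, Measure.map_id, add_zero]
  · rw [gaussianReal_of_var_ne_zero 0 h₁, gaussianReal_of_var_ne_zero 0 h₂,
      gaussianReal_of_var_ne_zero 0 (by simp [h₁]),
      map_add_withDensity _ _ (measurable_gaussianPDF _ _) (measurable_gaussianPDF _ _)]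
    congr 1
    funext z
    exact lint_gauss_conv v₁ v₂ h₁ h₂ z

lemma indepFun_add_gauss {Ω : Type*} [MeasurableSpace Ω] {μ : Measure Ω} [IsProbabilityMeasure μ]
    {X Y : Ω → ℝ} (hX : Measurable X) (hY : Measurable Y) (h : IndepFun X Y μ)
    {v₁ v₂ : ℝ≥0} (hmX : μ.map X = gaussianReal 0 v₁) (hmY : μ.map Y = gaussianReal 0 v₂) :
    μ.map (fun ω => X ω + Y ω) = gaussianReal 0 (v₁ + v₂) := by
  have hprod := (indepFun_iff_map_prod_eq_prod_map_map hX.aemeasurable hY.aemeasurable).mp h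
  have hc : (fun ω => X ω + Y ω) = (fun p : ℝ × ℝ => p.1 + p.2) ∘ (fun ω => (X ω, Y ω)) := rfl
  rw [hc, ← Measure.map_map measurable_add (hX.prodMk hY), hprod, hmX, hmY]
  exact gaussianReal_conv v₁ v₂

lemma map_sum_gauss {ι : Type*} {Ω : Type*} [MeasurableSpace Ω] {μ : Measure Ω}
    [IsProbabilityMeasure μ]
    {f : ι → Ω → ℝ} (hf : ∀ i, Measurable (f i))
    (hindep : iIndepFun f μ)
    (hg : ∀ i, μ.map (f i) = gaussianReal 0 1)
    (c : ι → ℝ) (S : Finset ι) :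
    μ.map (fun ω => ∑ i ∈ S, c i * f i ω)
      = gaussianReal 0 (Real.toNNReal (∑ i ∈ S, (c i)^2)) := by
  classical
  induction S using Finset.induction_on with
  | empty =>
      simp only [Finset.sum_empty]
      rw [Measure.map_const, measure_univ, one_smul, Real.toNNReal_zero, gaussianReal_zero_var]
  | @insert i S hi ih =>
      have hf' : ∀ j, Measurable (fun ω => c j * f j ω) := fun j => (hf j).const_mul (c j)
      have hindep' : iIndepFun (fun j ω => c j * f j ω) μ := by
        have := hindep.comp (fun j (x : ℝ) => c j * x) (fun j => measurable_const_mul (c j))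
        exact this
      have hI : IndepFun (fun ω => ∑ j ∈ S, c j * f j ω) (fun ω => c i * f i ω) μ := by
        have := hindep'.indepFun_finsetSum_of_notMem hf' hi
        have he : (∑ j ∈ S, fun ω => c j * f j ω) = fun ω => ∑ j ∈ S, c j * f j ω := by
          funext ω; simp [Finset.sum_apply]
        rwa [he] at this
      have hmX : μ.map (fun ω => c i * f i ω) = gaussianReal 0 (Real.toNNReal ((c i)^2)) := by
        rw [show (fun ω => c i * f i ω) = (fun x => c i * x) ∘ f i from rfl,
          ← Measure.map_map (measurable_const_mul (c i)) (hf i), hg i,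
          gaussianReal_map_const_mul, mul_zero]
        congr 1
        ext
        simp [Real.coe_toNNReal _ (sq_nonneg (c i))]
      have hsum : μ.map (fun ω => c i * f i ω + ∑ j ∈ S, c j * f j ω)
          = gaussianReal 0 (Real.toNNReal ((c i)^2) + Real.toNNReal (∑ j ∈ S, (c j)^2)) :=
        indepFun_add_gauss (hf' i) (Finset.measurable_sum S (fun j _ => hf' j)) hI.symm hmX ih
      have h1 : (fun ω => ∑ j ∈ Insert.insert i S, c j * f j ω)
          = fun ω => c i * f i ω + ∑ j ∈ S, c j * f j ω := by
        funext ω; rw [Finset.sum_insert hi]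
      rw [h1, hsum]
      congr 1
      rw [Finset.sum_insert hi,
        Real.toNNReal_add (sq_nonneg _) (Finset.sum_nonneg fun j _ => sq_nonneg _)]

lemma iIndepFun_blocks {ι : Type*} {G : Type*} {Ω : Type*} [MeasurableSpace Ω] {μ : Measure Ω}
    [IsProbabilityMeasure μ]
    {f : ι → Ω → ℝ} (hf : ∀ i, Measurable (f i))
    (hindep : iIndepFun f μ)
    (B : G → Finset ι) (hdisj : ∀ g g', g ≠ g' → Disjoint (B g) (B g'))
    (c : G → ι → ℝ) :
    iIndepFun (fun g ω => ∑ i ∈ B g, c g i * f i ω) μ := by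
  classical
  rw [iIndepFun_iff_measure_inter_preimage_eq_mul]
  intro S E
  induction S using Finset.induction_on with
  | empty => intro hE; simp
  | @insert g₀ S hg₀ ih =>
    intro hE
    set U : Finset ι := S.biUnion B with hU
    have hDU : Disjoint (B g₀) U := by
      rw [hU, Finset.disjoint_biUnion_right]
      exact fun g hg => hdisj g₀ g (by rintro rfl; exact hg₀ hg)
    have hIF : IndepFun (fun ω (i : B g₀) => f i ω) (fun ω (i : U) => f i ω) μ :=
      hindep.indepFun_finset _ _ hDU hf
    set ψ : (↥(B g₀) → ℝ) → ℝ := fun x => ∑ i : ↥(B g₀), c g₀ i * x i with hψdef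
    have hψ : Measurable ψ :=
      Finset.measurable_sum Finset.univ (fun i _ => (measurable_pi_apply i).const_mul _)
    have hFg₀ : (fun ω => ∑ i ∈ B g₀, c g₀ i * f i ω)
        = ψ ∘ (fun ω (i : ↥(B g₀)) => f i ω) := by
      funext ω
      exact (Finset.sum_coe_sort (B g₀) (fun i => c g₀ i * f i ω)).symm
    set χ : G → (↥U → ℝ) → ℝ :=
      fun g x => ∑ i : ↥U, (if i.1 ∈ B g then c g i.1 else 0) * x i with hχdef
    have hχ : ∀ g, Measurable (χ g) := fun g =>
      Finset.measurable_sum Finset.univ (fun i _ => (measurable_pi_apply i).const_mul _)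
    have hFg : ∀ g ∈ S, (fun ω => ∑ i ∈ B g, c g i * f i ω)
        = χ g ∘ (fun ω (i : ↥U) => f i ω) := by
      intro g hg
      funext ω
      show _ = ∑ i : ↥U, (if i.1 ∈ B g then c g i.1 else 0) * f i.1 ω
      rw [Finset.sum_coe_sort U (fun i => (if i ∈ B g then c g i else 0) * f i ω)]
      simp_rw [ite_mul, zero_mul]
      rw [Finset.sum_ite_mem, Finset.inter_eq_right.mpr (Finset.subset_biUnion_of_mem B hg)]
    set D : Set (↥U → ℝ) := ⋂ g ∈ S, χ g ⁻¹' E g with hDdef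
    have hD : MeasurableSet D :=
      MeasurableSet.biInter S.countable_toSet
        (fun g hg => (hχ g) (hE g (Finset.mem_insert_of_mem hg)))
    have hpre : (fun ω (i : ↥U) => f i ω) ⁻¹' D
        = ⋂ g ∈ S, (fun ω => ∑ i ∈ B g, c g i * f i ω) ⁻¹' E g := by
      rw [hDdef, Set.preimage_iInter₂]
      exact Set.iInter₂_congr fun g hg => by rw [hFg g hg, Set.preimage_comp]
    have hIF' : IndepFun (fun ω => ∑ i ∈ B g₀, c g₀ i * f i ω) (fun ω (i : ↥U) => f i ω) μ := by
      rw [hFg₀]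
      exact hIF.comp hψ measurable_id
    rw [Finset.set_biInter_insert, Finset.prod_insert hg₀, ← hpre,
      hIF'.measure_inter_preimage_eq_mul _ _ (hE g₀ (Finset.mem_insert_self _ _)) hD, hpre,
      ih (fun g hg => hE g (Finset.mem_insert_of_mem hg))]


/-- unfolded index type -/
abbrev HIdxT (n s₁ s₂ : ℕ) := Σ s : Set.Icc s₁ s₂, (Fin s.1 → Fin n)

noncomputable def hCoef {n k : ℕ} (s₁ s₂ : ℕ)
    (φ : (s : ℕ) → (Fin s → Fin k) → ℝ)
    (σ : (s : ℕ) → (Fin s → Fin n) → ℝ)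
    (y ynew : Fin n → Fin k) (i : HIdxT n s₁ s₂) : ℝ :=
  (1 / σ i.1 i.2) * (φ i.1 (ynew ∘ i.2) - φ i.1 (y ∘ i.2))

lemma sum_reindex {n : ℕ} (s₁ s₂ : ℕ) (F : (s : ℕ) → (Fin s → Fin n) → ℝ) :
    ∑ s ∈ Finset.Icc s₁ s₂, ∑ t : Fin s → Fin n, F s t
      = ∑ i : HIdxT n s₁ s₂, F i.1 i.2 := by
  rw [← Finset.univ_sigma_univ, Finset.sum_sigma]
  exact Finset.sum_subtype (Finset.Icc s₁ s₂) (fun x => by simp [Set.mem_Icc])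
    (fun s => ∑ t : Fin s → Fin n, F s t)

noncomputable def hLin {n s₁ s₂ : ℕ} (c : HIdxT n s₁ s₂ → ℝ) (w : HNoise n) : ℝ :=
  ∑ i : HIdxT n s₁ s₂, c i * w i.1 i.2

lemma hLin_comp {n s₁ s₂ : ℕ} (c : HIdxT n s₁ s₂ → ℝ) (S : Finset (HIdxT n s₁ s₂))
    (h : ∀ i ∉ S, c i = 0) :
    hLin c = (fun x : ↥S → ℝ => ∑ i : ↥S, c i.1 * x i) ∘ (fun w (i : ↥S) => w i.1.1 i.1.2) := by
  funext w
  show ∑ i : HIdxT n s₁ s₂, c i * w i.1 i.2 = ∑ i : ↥S, c i.1 * w i.1.1 i.1.2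
  rw [Finset.sum_coe_sort S (fun i => c i * w i.1 i.2)]
  exact (Finset.sum_subset (Finset.subset_univ S) (fun i _ hi => by rw [h i hi, zero_mul])).symm

lemma hLin_restrict {n s₁ s₂ : ℕ} (c : HIdxT n s₁ s₂ → ℝ) (S : Finset (HIdxT n s₁ s₂))
    (h : ∀ i ∉ S, c i = 0) :
    hLin c = fun w => ∑ i ∈ S, c i * w i.1 i.2 := by
  funext w
  show ∑ i : HIdxT n s₁ s₂, c i * w i.1 i.2 = _
  rw [← Finset.sum_subset (Finset.subset_univ S) (fun i _ hi => by rw [h i hi, zero_mul])]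

lemma hProj_eq_sum {n k : ℕ} (s₁ s₂ : ℕ)
    (φ : (s : ℕ) → (Fin s → Fin k) → ℝ)
    (σ : (s : ℕ) → (Fin s → Fin n) → ℝ)
    (y ynew : Fin n → Fin k) (H : Finset (Fin n))
    (cpred : ℕ → Prop) [DecidablePred cpred] (w : HNoise n) :
    hProj s₁ s₂ φ σ y ynew H cpred w
      = ∑ i : HIdxT n s₁ s₂,
          (if cpred (countH H i.2) then hCoef s₁ s₂ φ σ y ynew i else 0) * w i.1 i.2 := by
  unfold hProj
  rw [sum_reindex s₁ s₂ (fun s t => if cpred (countH H t) then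
    w s t * ((1 / σ s t) * (φ s (ynew ∘ t) - φ s (y ∘ t))) else 0)]
  refine Finset.sum_congr rfl fun i _ => ?_
  by_cases h : cpred (countH H i.2) <;> simp [h, hCoef, mul_comm]

lemma hProj_eq_hLin {n k : ℕ} (s₁ s₂ : ℕ)
    (φ : (s : ℕ) → (Fin s → Fin k) → ℝ)
    (σ : (s : ℕ) → (Fin s → Fin n) → ℝ)
    (y ynew : Fin n → Fin k) (H : Finset (Fin n))
    (cpred : ℕ → Prop) [DecidablePred cpred] :
    hProj s₁ s₂ φ σ y ynew H cpred
      = hLin (fun i => if cpred (countH H i.2) then hCoef s₁ s₂ φ σ y ynew i else 0) := by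
  funext w
  rw [hProj_eq_sum]
  rfl

lemma sum_j_collapse {n : ℕ} {s : ℕ} (H : Finset (Fin n)) (g : Fin n) (hg : g ∈ H)
    (t : Fin s → Fin n) (q : ℝ) :
    (∑ j : Fin s, if t j = g ∧ ∀ r : Fin s, r ≠ j → t r ∉ H then q else 0)
      = if countH H t = 1 ∧ ∃ r, t r = g then q else 0 := by
  classical
  by_cases hex : ∃ j : Fin s, t j = g ∧ ∀ r : Fin s, r ≠ j → t r ∉ H
  · obtain ⟨j₀, hj₁, hj₂⟩ := hex
    have hterm : ∀ j : Fin s, j ≠ j₀ → ¬(t j = g ∧ ∀ r : Fin s, r ≠ j → t r ∉ H) := by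
      rintro j hne ⟨h1, h2⟩
      exact (h2 j₀ (fun e => hne e.symm)) (hj₁ ▸ hg)
    rw [Finset.sum_eq_single j₀ (fun j _ hne => if_neg (hterm j hne))
      (fun h => absurd (Finset.mem_univ j₀) h), if_pos ⟨hj₁, hj₂⟩, eq_comm, if_pos]
    constructor
    · unfold countH
      have : (Finset.univ.filter fun r => t r ∈ H) = {j₀} := by
        ext r
        simp only [Finset.mem_filter, Finset.mem_univ, true_and, Finset.mem_singleton]
        constructor
        · intro hr
          by_contra hne
          exact hj₂ r hne hr
        · rintro rfl; exact hj₁ ▸ hg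
      rw [this, Finset.card_singleton]
    · exact ⟨j₀, hj₁⟩
  · rw [Finset.sum_eq_zero (fun j _ => if_neg (fun hP => hex ⟨j, hP⟩)), eq_comm, if_neg]
    rintro ⟨hc, r₀, hr₀⟩
    apply hex
    unfold countH at hc
    obtain ⟨j₀, hfil⟩ := Finset.card_eq_one.mp hc
    have hr₀mem : r₀ ∈ (Finset.univ.filter fun r => t r ∈ H) := by
      simp [hr₀ ▸ hg]
    refine ⟨r₀, hr₀, fun r hr hrH => hr ?_⟩
    have hrmem : r ∈ (Finset.univ.filter fun r => t r ∈ H) := by simp [hrH]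
    rw [hfil, Finset.mem_singleton] at hr₀mem hrmem
    rw [hrmem, hr₀mem]

lemma hVarExpr_eq {n k : ℕ} (s₁ s₂ : ℕ)
    (φ : (s : ℕ) → (Fin s → Fin k) → ℝ)
    (σ : (s : ℕ) → (Fin s → Fin n) → ℝ)
    (y ynew : Fin n → Fin k) (H : Finset (Fin n)) (g : Fin n) (hg : g ∈ H) :
    hVarExpr s₁ s₂ φ σ y ynew H g
      = ∑ i : HIdxT n s₁ s₂, if countH H i.2 = 1 ∧ ∃ r, i.2 r = g then
          (hCoef s₁ s₂ φ σ y ynew i)^2 else 0 := by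
  unfold hVarExpr
  simp only [hCoef]
  rw [← sum_reindex s₁ s₂ (fun s t => if countH H t = 1 ∧ ∃ r, t r = g then
    ((1 / σ s t) * (φ s (ynew ∘ t) - φ s (y ∘ t)))^2 else 0)]
  refine Finset.sum_congr rfl fun s _ => ?_
  rw [Finset.sum_comm]
  exact Finset.sum_congr rfl fun t _ => sum_j_collapse H g hg t _

lemma hProj_comp {n k : ℕ} (s₁ s₂ : ℕ)
    (φ : (s : ℕ) → (Fin s → Fin k) → ℝ)
    (σ : (s : ℕ) → (Fin s → Fin n) → ℝ)
    (y ynew : Fin n → Fin k) (H : Finset (Fin n))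
    (cpred : ℕ → Prop) [DecidablePred cpred] (S : Finset (HIdxT n s₁ s₂))
    (hS : ∀ i, i ∈ S ↔ cpred (countH H i.2)) :
    hProj s₁ s₂ φ σ y ynew H cpred
      = (fun x : ↥S → ℝ => ∑ i : ↥S,
          (if cpred (countH H i.1.2) then hCoef s₁ s₂ φ σ y ynew i.1 else 0) * x i)
        ∘ (fun w (i : ↥S) => w i.1.1 i.1.2) := by
  rw [hProj_eq_hLin]
  exact hLin_comp _ S (fun i hi => if_neg (fun h => hi ((hS i).mpr h)))

end Stmt16Aux

open Stmt16Aux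

/-- the decomposition `⟨W, Φ*(A_{y^{(a)}} − A_y)⟩ = 𝒳_a + 𝒴_a + 𝒵_a`
satisfies: (1) `𝒳_a = 0` for `a ∈ H`; (2) `𝒴_a` and `𝒵_a` are independent; (3) the `𝒴_g`,
`g ∈ H`, are independent centered Gaussians with the stated variances. -/
theorem stmt16 {n : ℕ} (k : ℕ) (hkn : k ≤ n) (hk : 2 ≤ k)
    (s₁ s₂ : ℕ) (hs₁ : 2 ≤ s₁) (hs₁₂ : s₁ ≤ s₂)
    (φ : (s : ℕ) → (Fin s → Fin k) → ℝ) (hφ : ∀ s v, 0 ≤ φ s v)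
    (σ : (s : ℕ) → (Fin s → Fin n) → ℝ) (hσ : ∀ s t, 0 < σ s t)
    (y : Fin n → Fin k) (H : Finset (Fin n))
    (ya : Fin n → (Fin n → Fin k))
    (hya : ∀ a : Fin n, (∀ b : Fin n, b ≠ a → ya a b = y b) ∧ ya a a ≠ y a)
    (μ : Measure (HNoise n)) [IsProbabilityMeasure μ]
    (hindep : iIndepFun
      (fun (a : HIdx n s₁ s₂) (w : HNoise n) => w a.1 a.2) μ)
    (hgauss : ∀ a : HIdx n s₁ s₂,
      Measure.map (fun w : HNoise n => w a.1 a.2) μ = gaussianReal 0 1) :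
    (∀ a ∈ H, ∀ w : HNoise n,
        hProj s₁ s₂ φ σ y (ya a) H (· = 0) w = 0) ∧
    (∀ a ∈ H,
        ProbabilityTheory.IndepFun (hProj s₁ s₂ φ σ y (ya a) H (· = 1))
          (hProj s₁ s₂ φ σ y (ya a) H (2 ≤ ·)) μ) ∧
    iIndepFun
      (fun g : {g : Fin n // g ∈ H} => hProj s₁ s₂ φ σ y (ya g.1) H (· = 1)) μ ∧
    (∀ g ∈ H,
        Measure.map (hProj s₁ s₂ φ σ y (ya g) H (· = 1)) μ =
          gaussianReal 0 (Real.toNNReal (hVarExpr s₁ s₂ φ σ y (ya g) H g))) := by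
  classical
  have hcoord : ∀ i : HIdxT n s₁ s₂, Measurable (fun w : HNoise n => w i.1 i.2) :=
    fun i => (measurable_pi_apply i.2).comp (measurable_pi_apply (i.1 : ℕ))
  have hindep' : iIndepFun
      (fun (i : HIdxT n s₁ s₂) (w : HNoise n) => w i.1 i.2) μ := hindep
  have hgauss' : ∀ i : HIdxT n s₁ s₂,
      Measure.map (fun w : HNoise n => w i.1 i.2) μ = gaussianReal 0 1 := hgauss
  have hcz : ∀ (a : Fin n) (i : HIdxT n s₁ s₂), (∀ r, i.2 r ≠ a) →
      hCoef s₁ s₂ φ σ y (ya a) i = 0 := by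
    intro a i hr
    have hyy : ya a ∘ i.2 = y ∘ i.2 := funext fun r => (hya a).1 (i.2 r) (hr r)
    simp [hCoef, hyy]
  refine ⟨?_, ?_, ?_, ?_⟩
  · -- part 1
    intro a ha w
    unfold hProj
    refine Finset.sum_eq_zero fun s _ => Finset.sum_eq_zero fun t _ => ?_
    by_cases h : countH H t = 0
    · have hnot : ∀ r, t r ∉ H := by
        intro r hr
        have hpos : 0 < (Finset.univ.filter fun r => t r ∈ H).card :=
          Finset.card_pos.mpr ⟨r, by simp [hr]⟩
        unfold countH at h
        omega
      have hyy : ya a ∘ t = y ∘ t := funext fun r => (hya a).1 (t r) (fun e => hnot r (e ▸ ha))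
      simp [h, hyy]
    · simp [h]
  · -- part 2
    intro a ha
    have hS1 : ∀ i : HIdxT n s₁ s₂,
        i ∈ Finset.univ.filter (fun i : HIdxT n s₁ s₂ => countH H i.2 = 1)
          ↔ countH H i.2 = 1 := fun i => by simp
    have hS2 : ∀ i : HIdxT n s₁ s₂,
        i ∈ Finset.univ.filter (fun i : HIdxT n s₁ s₂ => 2 ≤ countH H i.2)
          ↔ 2 ≤ countH H i.2 := fun i => by simp
    have hdisj : Disjoint (Finset.univ.filter (fun i : HIdxT n s₁ s₂ => countH H i.2 = 1))
        (Finset.univ.filter (fun i : HIdxT n s₁ s₂ => 2 ≤ countH H i.2)) := by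
      rw [Finset.disjoint_left]
      intro i h1 h2
      rw [Finset.mem_filter] at h1 h2
      omega
    rw [hProj_comp s₁ s₂ φ σ y (ya a) H (· = 1) _ hS1,
      hProj_comp s₁ s₂ φ σ y (ya a) H (2 ≤ ·) _ hS2]
    exact (hindep'.indepFun_finset _ _ hdisj hcoord).comp
      (Finset.measurable_sum _ (fun i _ => (measurable_pi_apply i).const_mul _))
      (Finset.measurable_sum _ (fun i _ => (measurable_pi_apply i).const_mul _))
  · -- part 3 : independence of the 𝒴_g
    set B : {g : Fin n // g ∈ H} → Finset (HIdxT n s₁ s₂) := fun g =>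
      Finset.univ.filter (fun i => countH H i.2 = 1 ∧ ∃ r, i.2 r = g.1) with hBd
    have hBdisj : ∀ (g g' : {g : Fin n // g ∈ H}), g ≠ g' → Disjoint (B g) (B g') := by
      intro g g' hne
      rw [Finset.disjoint_left]
      intro i hi hi'
      rw [hBd, Finset.mem_filter] at hi hi'
      obtain ⟨-, h1, r, hr⟩ := hi
      obtain ⟨-, -, r', hr'⟩ := hi'
      have hrr : r ≠ r' := by
        intro e
        exact hne (Subtype.ext (by rw [← hr, e, hr']))
      have h2 : 2 ≤ countH H i.2 := by
        unfold countH
        have hsub : ({r, r'} : Finset (Fin (i.1 : ℕ))) ⊆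
            Finset.univ.filter (fun j => i.2 j ∈ H) := by
          intro x hx
          simp only [Finset.mem_insert, Finset.mem_singleton] at hx
          rcases hx with rfl | rfl
          · simp [hr, g.2]
          · simp [hr', g'.2]
        calc 2 = ({r, r'} : Finset (Fin (i.1 : ℕ))).card := (Finset.card_pair hrr).symm
          _ ≤ _ := Finset.card_le_card hsub
      omega
    have hblocks := iIndepFun_blocks hcoord hindep' B hBdisj
      (fun g i => if countH H i.2 = 1 then hCoef s₁ s₂ φ σ y (ya g.1) i else 0)
    have hfam : (fun (g : {g : Fin n // g ∈ H}) (ω : HNoise n) =>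
        ∑ i ∈ B g, (if countH H i.2 = 1 then hCoef s₁ s₂ φ σ y (ya g.1) i else 0) * ω i.1 i.2)
        = fun g : {g : Fin n // g ∈ H} => hProj s₁ s₂ φ σ y (ya g.1) H (· = 1) := by
      funext g w
      rw [hProj_eq_sum s₁ s₂ φ σ y (ya g.1) H (· = 1) w]
      refine Finset.sum_subset (Finset.subset_univ _) ?_
      intro i _ hi
      by_cases h1 : countH H i.2 = 1
      · have h2 : ¬ ∃ r, i.2 r = g.1 := fun h2 =>
          hi (Finset.mem_filter.mpr ⟨Finset.mem_univ _, h1, h2⟩)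
        push_neg at h2
        simp [h1, hcz g.1 i h2]
      · simp [h1]
    rw [← hfam]
    exact hblocks
  · -- part 4 : gaussian law
    intro g hg
    have hvar : (∑ i : HIdxT n s₁ s₂,
        (if countH H i.2 = 1 then hCoef s₁ s₂ φ σ y (ya g) i else 0)^2)
        = hVarExpr s₁ s₂ φ σ y (ya g) H g := by
      rw [hVarExpr_eq s₁ s₂ φ σ y (ya g) H g hg]
      refine Finset.sum_congr rfl fun i _ => ?_
      by_cases h1 : countH H i.2 = 1
      · by_cases h2 : ∃ r, i.2 r = g
        · simp [h1, h2]
        · have h2' : ∀ r, i.2 r ≠ g := by push_neg at h2; exact h2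
          simp [h1, h2, hcz g i h2']
      · simp [h1]
    rw [hProj_eq_hLin s₁ s₂ φ σ y (ya g) H (· = 1), ← hvar]
    exact map_sum_gauss hcoord hindep' hgauss'
      (fun i => if countH H i.2 = 1 then hCoef s₁ s₂ φ σ y (ya g) i else 0) Finset.univ
end
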